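/- Let A : J → ℝ be C¹ with A' Lipschitz with constant M, i.e. |A'(x) − A'(y)| ≤ M|x−y| for all x, y ∈ J. Then for any three distinct points x1, x2, x3 ∈ J, the quantity S[Re K_Γ](z) = 2·Σ_{j} (1/(s²(x_j)·ℓ_k²·ℓ_l²)) · [∫_{x_k}^{x_j}(A'(t)−A'(x_j))dt] · [∫_{x_l}^{x_j}(A'(t)−A'(x_j))dt] satisfies |S[Re K_Γ](z)| ≤ (3/2)·M², where s²(x) = 1 + A'(x)², ℓ_j² = (x_l−x_k)² + (A(x_l)−A(x_k))², and for each j, {k,l} = {1,2,3}\{j} with k < l. -/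
import Mathlib


open intervalIntegral

private lemma key_int (A' : ℝ → ℝ) (M a b : ℝ)
    (hcont : ContinuousOn A' (Set.uIcc a b))
    (hLip : ∀ t ∈ Set.uIcc a b, |A' t - A' b| ≤ M * |t - b|) :
    |∫ t in a..b, (A' t - A' b)| ≤ M / 2 * (b - a) ^ 2 := by
  have hint : IntervalIntegrable (fun t => A' t - A' b) MeasureTheory.volume a b :=
    (hcont.sub continuousOn_const).intervalIntegrable
  rcases le_total a b with hab | hab
  · have h1 : |∫ t in a..b, (A' t - A' b)| ≤ ∫ t in a..b, |A' t - A' b| :=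
      intervalIntegral.abs_integral_le_integral_abs hab
    have h2 : (∫ t in a..b, |A' t - A' b|) ≤ ∫ t in a..b, M * (b - t) := by
      apply intervalIntegral.integral_mono_on hab hint.abs
      · exact (continuousOn_const.mul (continuousOn_const.sub (continuousOn_id))).intervalIntegrable
      · intro t ht
        have := hLip t (by rw [Set.uIcc_of_le hab]; exact ht)
        have htb : |t - b| = b - t := by
          rw [abs_sub_comm, abs_of_nonneg (by linarith [ht.2])]
        rw [htb] at this; exact this
    have h3 : (∫ t in a..b, M * (b - t)) = M / 2 * (b - a) ^ 2 := by
      rw [intervalIntegral.integral_const_mul, intervalIntegral.integral_sub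
        intervalIntegrable_const intervalIntegrable_id, intervalIntegral.integral_const,
        integral_id, smul_eq_mul]
      ring
    linarith
  · rw [intervalIntegral.integral_symm, abs_neg]
    have h1 : |∫ t in b..a, (A' t - A' b)| ≤ ∫ t in b..a, |A' t - A' b| :=
      intervalIntegral.abs_integral_le_integral_abs hab
    have h2 : (∫ t in b..a, |A' t - A' b|) ≤ ∫ t in b..a, M * (t - b) := by
      apply intervalIntegral.integral_mono_on hab hint.symm.abs
      · exact (continuousOn_const.mul ((continuousOn_id).sub continuousOn_const)).intervalIntegrable
      · intro t ht
        have := hLip t (by rw [Set.uIcc_of_ge hab]; exact ht)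
        have htb : |t - b| = t - b := abs_of_nonneg (by linarith [ht.1])
        rw [htb] at this; exact this
    have h3 : (∫ t in b..a, M * (t - b)) = M / 2 * (b - a) ^ 2 := by
      rw [intervalIntegral.integral_const_mul, intervalIntegral.integral_sub
        intervalIntegrable_id intervalIntegrable_const, intervalIntegral.integral_const,
        integral_id, smul_eq_mul]
      ring
    linarith

private lemma aux_term (s L1 L2 I1 I2 D1 D2 M : ℝ) (hs : 1 ≤ s)
    (hD1 : 0 < D1) (hD2 : 0 < D2) (hL1 : D2 ≤ L1) (hL2 : D1 ≤ L2)
    (hI1 : |I1| ≤ M / 2 * D1) (hI2 : |I2| ≤ M / 2 * D2) :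
    |1 / (s * L1 * L2) * I1 * I2| ≤ M ^ 2 / 4 := by
  have hL1' : 0 < L1 := hD2.trans_le hL1
  have hL2' : 0 < L2 := hD1.trans_le hL2
  have hden : 0 < s * L1 * L2 := by positivity
  rw [abs_mul, abs_mul, abs_div, abs_one, abs_of_pos hden]
  have h1 : 0 ≤ |I1| := abs_nonneg _
  have h2 : 0 ≤ |I2| := abs_nonneg _
  have key : |I1| * |I2| ≤ M ^ 2 / 4 * (D1 * D2) := by nlinarith
  have hle : D1 * D2 ≤ s * L1 * L2 := by
    calc D1 * D2 = D2 * D1 := by ring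
      _ ≤ L1 * L2 := mul_le_mul hL1 hL2 hD1.le hL1'.le
      _ ≤ s * L1 * L2 := by nlinarith
  have hM2 : 0 ≤ M ^ 2 / 4 := by positivity
  have heq : 1 / (s * L1 * L2) * |I1| * |I2| = |I1| * |I2| / (s * L1 * L2) := by ring
  rw [heq, div_le_iff₀ hden]
  nlinarith

/-- If `A'` is `M`-Lipschitz on `J`, then the symmetrized real part of the restricted Cauchy
kernel on the graph of `A` is bounded by `(3/2)·M²`. -/
theorem stmt9 (A A' : ℝ → ℝ) (J : Set ℝ) (hJ : J.OrdConnected) (M : ℝ)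
    (hd1 : ∀ x ∈ J, HasDerivAt A (A' x) x)
    (hLip : ∀ x ∈ J, ∀ y ∈ J, |A' x - A' y| ≤ M * |x - y|)
    (x1 x2 x3 : ℝ) (h1 : x1 ∈ J) (h2 : x2 ∈ J) (h3 : x3 ∈ J)
    (h12 : x1 ≠ x2) (h13 : x1 ≠ x3) (h23 : x2 ≠ x3) :
    |2 * ((1 / ((1 + (A' x1) ^ 2) * ((x3 - x1) ^ 2 + (A x3 - A x1) ^ 2) *
            ((x2 - x1) ^ 2 + (A x2 - A x1) ^ 2))) *
          (∫ t in x2..x1, (A' t - A' x1)) * (∫ t in x3..x1, (A' t - A' x1)) +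
        (1 / ((1 + (A' x2) ^ 2) * ((x3 - x2) ^ 2 + (A x3 - A x2) ^ 2) *
            ((x2 - x1) ^ 2 + (A x2 - A x1) ^ 2))) *
          (∫ t in x1..x2, (A' t - A' x2)) * (∫ t in x3..x2, (A' t - A' x2)) +
        (1 / ((1 + (A' x3) ^ 2) * ((x3 - x2) ^ 2 + (A x3 - A x2) ^ 2) *
            ((x3 - x1) ^ 2 + (A x3 - A x1) ^ 2))) *
          (∫ t in x1..x3, (A' t - A' x3)) * (∫ t in x2..x3, (A' t - A' x3)))| ≤
      (3 / 2) * M ^ 2 := by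
  -- M is nonnegative
  have h12' : x1 - x2 ≠ 0 := sub_ne_zero.mpr h12
  have hM : 0 ≤ M := by
    have h0 : 0 ≤ |A' x1 - A' x2| := abs_nonneg _
    have h1' := hLip x1 h1 x2 h2
    have h2' : 0 < |x1 - x2| := abs_pos.mpr h12'
    nlinarith
  -- A' is continuous on J
  have hcont : ContinuousOn A' J := by
    have : LipschitzOnWith (Real.toNNReal M) A' J := by
      apply LipschitzOnWith.of_dist_le_mul
      intro x hx y hy
      rw [Real.dist_eq, Real.dist_eq, Real.coe_toNNReal M hM]
      exact hLip x hx y hy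
    exact this.continuousOn
  -- the key integral estimate for any two points of J
  have key : ∀ a ∈ J, ∀ b ∈ J, |∫ t in a..b, (A' t - A' b)| ≤ M / 2 * (b - a) ^ 2 := by
    intro a ha b hb
    have hsub : Set.uIcc a b ⊆ J := hJ.uIcc_subset ha hb
    exact key_int A' M a b (hcont.mono hsub)
      (fun t ht => hLip t (hsub ht) b hb)
  -- positivity of the squared differences
  have sqpos : ∀ u v : ℝ, u ≠ v → 0 < (u - v) ^ 2 := by
    intro u v huv
    have : u - v ≠ 0 := sub_ne_zero.mpr huv
    positivity
  have d12 : 0 < (x2 - x1) ^ 2 := sqpos x2 x1 (Ne.symm h12)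
  have d13 : 0 < (x3 - x1) ^ 2 := sqpos x3 x1 (Ne.symm h13)
  have d23 : 0 < (x3 - x2) ^ 2 := sqpos x3 x2 (Ne.symm h23)
  have L12 : (x2 - x1) ^ 2 ≤ (x2 - x1) ^ 2 + (A x2 - A x1) ^ 2 :=
    le_add_of_nonneg_right (sq_nonneg _)
  have L13 : (x3 - x1) ^ 2 ≤ (x3 - x1) ^ 2 + (A x3 - A x1) ^ 2 :=
    le_add_of_nonneg_right (sq_nonneg _)
  have L23 : (x3 - x2) ^ 2 ≤ (x3 - x2) ^ 2 + (A x3 - A x2) ^ 2 :=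
    le_add_of_nonneg_right (sq_nonneg _)
  -- the three term bounds
  have hT1 : |1 / ((1 + (A' x1) ^ 2) * ((x3 - x1) ^ 2 + (A x3 - A x1) ^ 2) *
        ((x2 - x1) ^ 2 + (A x2 - A x1) ^ 2)) *
        (∫ t in x2..x1, (A' t - A' x1)) * (∫ t in x3..x1, (A' t - A' x1))| ≤ M ^ 2 / 4 := by
    apply aux_term _ _ _ _ _ ((x2 - x1) ^ 2) ((x3 - x1) ^ 2) M (le_add_of_nonneg_right (sq_nonneg _))
      d12 d13 L13 L12
    · have := key x2 h2 x1 h1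
      have heq : (x1 - x2) ^ 2 = (x2 - x1) ^ 2 := by ring
      rwa [heq] at this
    · have := key x3 h3 x1 h1
      have heq : (x1 - x3) ^ 2 = (x3 - x1) ^ 2 := by ring
      rwa [heq] at this
  have hT2 : |1 / ((1 + (A' x2) ^ 2) * ((x3 - x2) ^ 2 + (A x3 - A x2) ^ 2) *
        ((x2 - x1) ^ 2 + (A x2 - A x1) ^ 2)) *
        (∫ t in x1..x2, (A' t - A' x2)) * (∫ t in x3..x2, (A' t - A' x2))| ≤ M ^ 2 / 4 := by
    apply aux_term _ _ _ _ _ ((x2 - x1) ^ 2) ((x3 - x2) ^ 2) M (le_add_of_nonneg_right (sq_nonneg _))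
      d12 d23 L23 L12
    · exact key x1 h1 x2 h2
    · have := key x3 h3 x2 h2
      have heq : (x2 - x3) ^ 2 = (x3 - x2) ^ 2 := by ring
      rwa [heq] at this
  have hT3 : |1 / ((1 + (A' x3) ^ 2) * ((x3 - x2) ^ 2 + (A x3 - A x2) ^ 2) *
        ((x3 - x1) ^ 2 + (A x3 - A x1) ^ 2)) *
        (∫ t in x1..x3, (A' t - A' x3)) * (∫ t in x2..x3, (A' t - A' x3))| ≤ M ^ 2 / 4 := by
    apply aux_term _ _ _ _ _ ((x3 - x1) ^ 2) ((x3 - x2) ^ 2) M (le_add_of_nonneg_right (sq_nonneg _))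
      d13 d23 L23 L13
    · exact key x1 h1 x3 h3
    · exact key x2 h2 x3 h3
  -- combine
  rw [abs_mul]
  have habs := abs_add_three
    (1 / ((1 + (A' x1) ^ 2) * ((x3 - x1) ^ 2 + (A x3 - A x1) ^ 2) *
        ((x2 - x1) ^ 2 + (A x2 - A x1) ^ 2)) *
        (∫ t in x2..x1, (A' t - A' x1)) * (∫ t in x3..x1, (A' t - A' x1)))
    (1 / ((1 + (A' x2) ^ 2) * ((x3 - x2) ^ 2 + (A x3 - A x2) ^ 2) *
        ((x2 - x1) ^ 2 + (A x2 - A x1) ^ 2)) *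
        (∫ t in x1..x2, (A' t - A' x2)) * (∫ t in x3..x2, (A' t - A' x2)))
    (1 / ((1 + (A' x3) ^ 2) * ((x3 - x2) ^ 2 + (A x3 - A x2) ^ 2) *
        ((x3 - x1) ^ 2 + (A x3 - A x1) ^ 2)) *
        (∫ t in x1..x3, (A' t - A' x3)) * (∫ t in x2..x3, (A' t - A' x3)))
  have h2abs : |(2 : ℝ)| = 2 := by norm_num
  rw [h2abs]
  nlinarith [habs, hT1, hT2, hT3]
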